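/- Suppose v_1, ..., v_{d²} ∈ ℂ^d are vectors such that for every X ∈ M_d(ℂ), (1/(d+1))·(X + tr(X)·I_d) = Σ_{i=1}^{d²} (v_i v_i*) X (v_i v_i*), and suppose the matrices {v_i v_i*}_{i=1}^{d²} are linearly independent in M_d(ℂ). Then ‖v_i‖⁴ = 1/d for all 1 ≤ i ≤ d², and |⟨v_i, v_j⟩|² = 1/(d(d+1)) for all i ≠ j; consequently, the normalized vectors w_i = v_i/‖v_i‖ satisfy |⟨w_i, w_j⟩|² = 1/(d+1) for all i ≠ j. -/

import Mathlib

open Matrix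

/-- The rank-one matrix `x y*` with entries `(x y*)_{k,l} = x_k * conj (y_l)`. -/
noncomputable def outer {d : ℕ} (x y : Fin d → ℂ) : Matrix (Fin d) (Fin d) ℂ :=
  fun k l => x k * (starRingEnd ℂ) (y l)

lemma outer_mul_outer {d : ℕ} (x y z w : EuclideanSpace ℂ (Fin d)) :
    outer x y * outer z w = (inner ℂ y z : ℂ) • outer x w := by
  ext k l
  simp only [Matrix.mul_apply, outer, Matrix.smul_apply, smul_eq_mul, PiLp.inner_apply,
    RCLike.inner_apply]
  rw [Finset.sum_mul]
  exact Finset.sum_congr rfl fun m _ => by ring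

lemma trace_outer {d : ℕ} (x y : EuclideanSpace ℂ (Fin d)) :
    (outer x y).trace = (inner ℂ y x : ℂ) := by
  simp only [Matrix.trace, Matrix.diag, outer, PiLp.inner_apply, RCLike.inner_apply]

/-- If `v_1, ..., v_{d²} ∈ ℂ^d` satisfy
`(1/(d+1))(X + tr(X) I_d) = ∑_i (v_i v_i*) X (v_i v_i*)` for all `X`, and the matrices
`{v_i v_i*}` are linearly independent, then `‖v_i‖⁴ = 1/d` for all `i`,
`|⟨v_i, v_j⟩|² = 1/(d(d+1))` for `i ≠ j`, and the normalized vectors `w_i = v_i / ‖v_i‖`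
satisfy `|⟨w_i, w_j⟩|² = 1/(d+1)` for `i ≠ j`. -/
theorem rank_one_positive_kraus_gives_sic {d : ℕ} (hd : 2 ≤ d)
    (v : Fin (d ^ 2) → EuclideanSpace ℂ (Fin d))
    (hrep : ∀ X : Matrix (Fin d) (Fin d) ℂ,
      ((d : ℂ) + 1)⁻¹ • (X + X.trace • (1 : Matrix (Fin d) (Fin d) ℂ)) =
        ∑ i, outer (v i) (v i) * X * outer (v i) (v i))
    (hli : LinearIndependent ℂ fun i => outer (v i) (v i)) :
    (∀ i, ‖v i‖ ^ 4 = 1 / d) ∧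
    (∀ i j, i ≠ j → ‖(inner ℂ (v i) (v j) : ℂ)‖ ^ 2 = 1 / (d * (d + 1))) ∧
    (∀ i j, i ≠ j →
      ‖(inner ℂ ((‖v i‖⁻¹ : ℂ) • v i) ((‖v j‖⁻¹ : ℂ) • v j) : ℂ)‖ ^ 2 = 1 / (d + 1)) := by
  have hd0 : (0:ℝ) < d := by positivity
  have hdc : ((d:ℂ) + 1) ≠ 0 := by
    intro h
    have : ((d:ℝ) + 1) = 0 := by exact_mod_cast congrArg Complex.re h
    linarith
  set P : Fin (d^2) → Matrix (Fin d) (Fin d) ℂ := fun i => outer (v i) (v i) with hP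
  -- Step 1: the identity matrix is `∑ i, ⟪v i, v i⟫ • P i`.
  have hone : (1 : Matrix (Fin d) (Fin d) ℂ) = ∑ i, (inner ℂ (v i) (v i) : ℂ) • P i := by
    have h := hrep 1
    simp only [Matrix.trace_one, Matrix.mul_one, Fintype.card_fin] at h
    have hl : ((d : ℂ) + 1)⁻¹ • ((1 : Matrix (Fin d) (Fin d) ℂ) + (d:ℂ) • 1) = 1 := by
      rw [show (1 : Matrix (Fin d) (Fin d) ℂ) + (d:ℂ) • 1 = ((d:ℂ)+1) • 1 by
        rw [add_smul, one_smul, add_comm], smul_smul, inv_mul_cancel₀ hdc, one_smul]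
    rw [hl] at h
    rw [h]
    exact Finset.sum_congr rfl fun i _ => by rw [outer_mul_outer]
  -- Step 2: the key algebraic identity.
  have key : ∀ i j, (inner ℂ (v i) (v j) : ℂ) * (inner ℂ (v j) (v i) : ℂ) =
      ((d:ℂ)+1)⁻¹ * ((inner ℂ (v j) (v j) : ℂ) * (inner ℂ (v i) (v i) : ℂ)
        + if i = j then 1 else 0) := by
    intro i j
    have h := hrep (P j)
    have hRHS : ∑ i, P i * P j * P i =
        ∑ i, ((inner ℂ (v i) (v j) : ℂ) * (inner ℂ (v j) (v i) : ℂ)) • P i := by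
      refine Finset.sum_congr rfl fun i _ => ?_
      rw [hP]
      rw [outer_mul_outer, Matrix.smul_mul, outer_mul_outer, smul_smul]
    rw [hRHS, trace_outer] at h
    have e1 : ∑ i, ((inner ℂ (v i) (v j) : ℂ) * (inner ℂ (v j) (v i) : ℂ)) • P i
        = ((d:ℂ)+1)⁻¹ • P j
          + (((d:ℂ)+1)⁻¹ * (inner ℂ (v j) (v j) : ℂ)) • (1 : Matrix (Fin d) (Fin d) ℂ) := by
      rw [← h, smul_add, smul_smul]
    have e2 : ∑ i, (((d:ℂ)+1)⁻¹ * ((inner ℂ (v j) (v j) : ℂ) * (inner ℂ (v i) (v i) : ℂ)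
          + if i = j then (1:ℂ) else 0)) • P i
        = ((d:ℂ)+1)⁻¹ • P j
          + (((d:ℂ)+1)⁻¹ * (inner ℂ (v j) (v j) : ℂ)) • (1 : Matrix (Fin d) (Fin d) ℂ) := by
      simp only [mul_add, add_smul, Finset.sum_add_distrib, mul_ite, mul_one, mul_zero,
        ite_smul, zero_smul, Finset.sum_ite_eq', Finset.mem_univ, if_true]
      rw [add_comm]
      congr 1
      rw [hone, Finset.smul_sum]
      refine Finset.sum_congr rfl fun i _ => ?_
      rw [smul_smul, mul_assoc]
    have h2 : ∑ i, (((inner ℂ (v i) (v j) : ℂ) * (inner ℂ (v j) (v i) : ℂ))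
        - (((d:ℂ)+1)⁻¹ * ((inner ℂ (v j) (v j) : ℂ) * (inner ℂ (v i) (v i) : ℂ)
          + if i = j then (1:ℂ) else 0))) • P i = 0 := by
      simp only [sub_smul, Finset.sum_sub_distrib, e1, e2, sub_self]
    have h3 := (Fintype.linearIndependent_iff.mp hli) _ h2 i
    have := sub_eq_zero.mp h3
    linear_combination this
  -- Step 3: extract the real statements.
  have h4 : ∀ i, ‖v i‖ ^ 4 = 1 / d := by
    intro i
    have h := key i i
    simp only [if_pos rfl, ↓reduceIte, inner_self_eq_norm_sq_to_K] at h
    have hc : (d:ℂ) * (‖v i‖:ℂ)^4 = 1 := by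
      field_simp at h
      linear_combination h
    have hr : (d:ℝ) * ‖v i‖^4 = 1 := by exact_mod_cast hc
    field_simp at hr ⊢
    linarith
  have hsq : ∀ i, ‖v i‖^2 = Real.sqrt (1/d) := by
    intro i
    rw [← Real.sqrt_sq (by positivity : (0:ℝ) ≤ ‖v i‖^2)]
    rw [show (‖v i‖^2)^2 = ‖v i‖^4 by ring, h4 i]
  have hprod : ∀ i j, ‖v i‖^2 * ‖v j‖^2 = 1/d := by
    intro i j
    rw [hsq i, hsq j, Real.mul_self_sqrt (by positivity)]
  have h2 : ∀ i j, i ≠ j → ‖(inner ℂ (v i) (v j) : ℂ)‖ ^ 2 = 1 / (d * (d + 1)) := by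
    intro i j hij
    have h := key i j
    rw [if_neg hij, ← inner_conj_symm (v j) (v i), Complex.mul_conj,
      inner_self_eq_norm_sq_to_K, inner_self_eq_norm_sq_to_K, add_zero] at h
    have hr : Complex.normSq (inner ℂ (v i) (v j)) = ((d:ℝ)+1)⁻¹ * (‖v j‖^2 * ‖v i‖^2) := by
      apply Complex.ofReal_injective
      push_cast
      exact_mod_cast h
    rw [Complex.sq_norm, hr, mul_comm (‖v j‖^2), hprod i j]
    field_simp
  refine ⟨h4, h2, ?_⟩
  intro i j hij
  have hv : ∀ i, ‖v i‖ ≠ 0 := by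
    intro i hh
    have h1 : (1:ℝ)/d ≠ 0 := by positivity
    exact h1 (by rw [← h4 i, hh]; norm_num)
  rw [inner_smul_left, inner_smul_right]
  rw [norm_mul, norm_mul]
  rw [RingHomIsometric.norm_map]
  simp only [Complex.norm_real, norm_inv, Real.norm_eq_abs, abs_norm]
  rw [mul_pow, mul_pow, h2 i j hij, inv_pow, inv_pow]
  rw [show (‖v i‖^2)⁻¹ * ((‖v j‖^2)⁻¹ * (1 / ((d:ℝ) * (d+1)))) =
    (‖v i‖^2 * ‖v j‖^2)⁻¹ * (1 / ((d:ℝ) * (d+1))) by ring, hprod i j]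
  field_simp
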